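/- For every integer p ≥ 1, D_p = (−1)^p · [ Σ_{m=1}^{⌊p/2⌋} 2^{2m+1}·binom(2p−2m−1, p−1)·η(2m) − 2^{2p−1} + binom(2p−1, p−1) ], where η(s) = Σ_{n=1}^∞ (−1)^{n−1}/n^s is the Dirichlet eta function. -/

import Mathlib

open Real

/-- `D p = Σ_{n=1}^∞ (−1)^{n−1} 2^{2p}/(n^p (n+2)^p)`. -/
noncomputable def D (p : ℕ) : ℝ :=
  ∑' n : ℕ, (-1 : ℝ) ^ n * (2 : ℝ) ^ (2 * p) / (((n : ℝ) + 1) ^ p * ((n : ℝ) + 3) ^ p)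

/-- Dirichlet eta function at a natural argument: `η(s) = Σ_{n=1}^∞ (−1)^{n−1}/n^s`. -/
noncomputable def etaR (s : ℕ) : ℝ := ∑' n : ℕ, (-1 : ℝ) ^ n / ((n : ℝ) + 1) ^ s

open Finset Filter

noncomputable def pfX (x : ℝ) (a b : ℕ) : ℝ :=
  ∑ i ∈ range a, (-1)^i * ((b+i-1).choose i : ℝ) / 2^(b+i) / x^(a-i)

noncomputable def PF (x : ℝ) (a b : ℕ) : ℝ :=
  pfX x a b + (-1)^(a+b) * pfX (-(x+2)) b a

lemma pfX_zero (x : ℝ) (a : ℕ) (ha : 1 ≤ a) : pfX x a 0 = 1 / x^a := by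
  unfold pfX
  rw [Finset.sum_eq_single 0]
  · simp
  · intro i hi hi0
    have : (0+i-1).choose i = 0 := by
      apply Nat.choose_eq_zero_of_lt; omega
    rw [this]; simp
  · intro h'; simp at h'; omega

lemma pfX_rec (x : ℝ) (a b : ℕ) :
    pfX x (a+1) (b+1) = (1/2) * pfX x (a+1) b - (1/2) * pfX x a (b+1) := by
  unfold pfX
  rw [Finset.sum_range_succ' (fun i => (-1:ℝ)^i * ((b+1+i-1).choose i : ℝ) / 2^(b+1+i) / x^(a+1-i)) a,
      Finset.sum_range_succ' (fun i => (-1:ℝ)^i * ((b+i-1).choose i : ℝ) / 2^(b+i) / x^(a+1-i)) a]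
  have key : ∀ i ∈ range a,
      (-1:ℝ)^(i+1) * ((b+1+(i+1)-1).choose (i+1) : ℝ) / 2^(b+1+(i+1)) / x^(a+1-(i+1))
      = (1/2) * ((-1:ℝ)^(i+1) * ((b+(i+1)-1).choose (i+1) : ℝ) / 2^(b+(i+1)) / x^(a+1-(i+1)))
        - (1/2) * ((-1:ℝ)^i * ((b+1+i-1).choose i : ℝ) / 2^(b+1+i) / x^(a-i)) := by
    intro i hi
    have e1 : b+1+(i+1)-1 = (b+i) + 1 := by omega
    have e2 : b+(i+1)-1 = b+i := by omega
    have e3 : b+1+i-1 = b+i := by omega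
    have e4 : a+1-(i+1) = a-i := by omega
    rw [e1, e2, e3, e4, Nat.choose_succ_succ (b+i) i]
    push_cast
    ring
  rw [Finset.sum_congr rfl key, Finset.sum_sub_distrib]
  have e0 : (b+1+0-1).choose 0 = 1 := Nat.choose_zero_right _
  have e0' : (b+0-1).choose 0 = 1 := Nat.choose_zero_right _
  rw [e0, e0', ← Finset.mul_sum, ← Finset.mul_sum]
  push_cast
  ring

lemma PF_rec (x : ℝ) (a b : ℕ) :
    PF x (a+1) (b+1) = (1/2) * (PF x (a+1) b - PF x a (b+1)) := by
  unfold PF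
  rw [pfX_rec x a b, pfX_rec (-(x+2)) b a]
  have h1 : (-1:ℝ)^(a+1+(b+1)) = (-1)^(a+b) := by
    rw [show a+1+(b+1) = (a+b)+2 by omega, pow_add]; ring
  have h2 : (-1:ℝ)^(a+1+b) = -(-1)^(a+b) := by
    rw [show a+1+b = (a+b)+1 by omega, pow_add]; ring
  have h3 : (-1:ℝ)^(a+(b+1)) = -(-1)^(a+b) := by
    rw [show a+(b+1) = (a+b)+1 by omega, pow_add]; ring
  rw [h1, h2, h3]
  ring

lemma PF_eq : ∀ n a b : ℕ, a + b = n → 1 ≤ n → ∀ x : ℝ, x ≠ 0 → x + 2 ≠ 0 →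
    PF x a b = 1 / (x^a * (x+2)^b) := by
  intro n
  induction n with
  | zero => omega
  | succ n ih =>
    intro a b hab _ x hx hx2
    rcases Nat.eq_zero_or_pos a with ha | ha
    · subst ha
      have hb : 1 ≤ b := by omega
      have h0 : PF x 0 b = (-1:ℝ)^(0+b) * (1 / (-(x+2))^b) := by
        unfold PF
        rw [pfX_zero _ _ hb]
        simp [pfX]
      rw [h0, neg_pow]
      have h2 : ((x+2):ℝ) ^ b ≠ 0 := pow_ne_zero _ hx2
      field_simp
      rw [div_eq_one_iff_eq (pow_ne_zero _ (neg_ne_zero.mpr hx2)), neg_pow (x+2) b]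
      ring
    · rcases Nat.eq_zero_or_pos b with hb | hb
      · subst hb
        unfold PF
        rw [pfX_zero x a ha]
        unfold pfX
        simp only [range_zero, Finset.sum_empty, mul_zero, add_zero, pow_zero, mul_one]
      · -- both ≥ 1
        obtain ⟨a', rfl⟩ : ∃ a', a = a' + 1 := ⟨a - 1, by omega⟩
        obtain ⟨b', rfl⟩ : ∃ b', b = b' + 1 := ⟨b - 1, by omega⟩
        rcases Nat.eq_zero_or_pos n with hn | hn
        · omega
        rw [PF_rec, ih (a'+1) b' (by omega) (by omega) x hx hx2,
            ih a' (b'+1) (by omega) (by omega) x hx hx2]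
        have h1 : x ^ (a'+1) ≠ 0 := pow_ne_zero _ hx
        have h2 : (x+2) ^ (b'+1) ≠ 0 := pow_ne_zero _ hx2
        field_simp
        ring

lemma expand_pf (p : ℕ) (hp : 1 ≤ p) (x : ℝ) (hx : x ≠ 0) (hx2 : x + 2 ≠ 0) :
    (2:ℝ)^(2*p) / (x^p * (x+2)^p)
      = ∑ i ∈ range p, ((p+i-1).choose i : ℝ) * 2^(p-i) *
          ((-1)^i / x^(p-i) + (-1)^p / (x+2)^(p-i)) := by
  have h := PF_eq (p+p) p p rfl (by omega) x hx hx2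
  have : (2:ℝ)^(2*p) / (x^p * (x+2)^p) = 2^(2*p) * PF x p p := by
    rw [h]; ring
  rw [this]
  unfold PF pfX
  rw [show (-1:ℝ)^(p+p) = 1 by rw [← two_mul]; exact Even.neg_one_pow ⟨p, two_mul p⟩]
  rw [one_mul, ← Finset.sum_add_distrib, Finset.mul_sum]
  apply Finset.sum_congr rfl
  intro i hi
  have hip : i < p := Finset.mem_range.mp hi
  have hXne : x^(p-i) ≠ 0 := pow_ne_zero _ hx
  have hYne : (x+2)^(p-i) ≠ 0 := pow_ne_zero _ hx2
  have h2 : (2:ℝ)^(2*p) = 2^(p-i) * 2^(p+i) := by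
    rw [← pow_add]; congr 1; omega
  have hneg : (-(x+2))^(p-i) = (-1)^(p-i) * (x+2)^(p-i) := neg_pow _ _
  have hpexp : (-1:ℝ)^p = (-1)^i * (-1)^(p-i) := by
    rw [← pow_add]; congr 1; omega
  rw [hneg, hpexp, h2]
  rcases Nat.even_or_odd (p-i) with he | he
  · rw [he.neg_one_pow]
    field_simp
  · rw [he.neg_one_pow]
    field_simp

lemma summable_one_div_shift (j : ℕ) (hj : 2 ≤ j) :
    Summable (fun n : ℕ => 1 / ((n:ℝ)+1)^j) := by
  have h : Summable (fun n : ℕ => 1 / (n:ℝ)^j) :=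
    (Real.summable_one_div_nat_pow).mpr hj
  have := (summable_nat_add_iff 1).mpr h
  simpa using this

lemma summable_eta (j : ℕ) (hj : 2 ≤ j) :
    Summable (fun n : ℕ => (-1:ℝ)^n / ((n:ℝ)+1)^j) := by
  apply Summable.of_abs
  have := summable_one_div_shift j hj
  apply this.congr
  intro n
  rw [abs_div, abs_pow, abs_neg, abs_one, one_pow, abs_pow]
  rw [abs_of_nonneg (by positivity : (0:ℝ) ≤ (n:ℝ)+1)]

lemma summable_eta_shift (j : ℕ) (hj : 2 ≤ j) :
    Summable (fun n : ℕ => (-1:ℝ)^n / ((n:ℝ)+3)^j) := by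
  have h := (summable_eta j hj).comp_injective (add_right_injective 2)
  apply h.congr
  intro n
  simp only [Function.comp]
  have : ((2+n : ℕ):ℝ) + 1 = (n:ℝ) + 3 := by push_cast; ring
  rw [this, pow_add]
  ring

lemma tsum_eta_shift (j : ℕ) (hj : 2 ≤ j) :
    ∑' n : ℕ, (-1:ℝ)^n / ((n:ℝ)+3)^j = etaR j - 1 + 1/2^j := by
  have hsum := summable_eta j hj
  have h := Summable.sum_add_tsum_nat_add 2 hsum
  have he : ∀ n : ℕ, (-1:ℝ)^(n+2) / (((n+2:ℕ):ℝ)+1)^j = (-1:ℝ)^n / ((n:ℝ)+3)^j := by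
    intro n
    rw [pow_add]
    push_cast
    ring_nf
  rw [tsum_congr he] at h
  have h0 : ∑ i ∈ range 2, (-1:ℝ)^i / ((i:ℝ)+1)^j = 1 - 1/2^j := by
    rw [Finset.sum_range_succ, Finset.sum_range_one]
    norm_num
    ring
  rw [h0] at h
  unfold etaR
  linarith [h]

lemma hasSum_tele (f : ℕ → ℝ) (hs : Summable (fun n => f n - f (n+2)))
    (h0 : Tendsto f atTop (nhds 0)) :
    HasSum (fun n => f n - f (n+2)) (f 0 + f 1) := by
  have key : ∀ N : ℕ, ∑ i ∈ range N, (f i - f (i+2)) = f 0 + f 1 - f N - f (N+1) := by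
    intro N
    induction N with
    | zero => simp
    | succ N ihN => rw [Finset.sum_range_succ, ihN]; ring
  have ht : Tendsto (fun N => ∑ i ∈ range N, (f i - f (i+2))) atTop
      (nhds (f 0 + f 1)) := by
    simp only [key]
    have h1 : Tendsto (fun N : ℕ => f (N+1)) atTop (nhds 0) :=
      h0.comp (tendsto_add_atTop_nat 1)
    have := ((tendsto_const_nhds (x := f 0 + f 1)).sub h0).sub h1
    simpa using this
  have h2 := hs.hasSum.tendsto_sum_nat
  have := tendsto_nhds_unique h2 ht
  rw [← this]
  exact hs.hasSum

lemma inner_hasSum (j : ℕ) (hj : 1 ≤ j) :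
    HasSum (fun n : ℕ => (-1:ℝ)^n * (1/((n:ℝ)+1)^j + (-1)^j / ((n:ℝ)+3)^j))
      ((if Even j then 2 * etaR j else 0) - (-1)^j * (1 - 1/2^j)) := by
  rcases eq_or_lt_of_le hj with h1 | h2
  · -- j = 1
    have hj1 : j = 1 := h1.symm
    subst hj1
    have heq : (fun n : ℕ => (-1:ℝ)^n * (1/((n:ℝ)+1)^1 + (-1)^1 / ((n:ℝ)+3)^1))
        = fun n : ℕ => (-1:ℝ)^n/((n:ℝ)+1) - (-1:ℝ)^(n+2)/(((n:ℝ)+2)+1) := by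
      funext n
      rw [pow_succ, pow_one]
      ring
    have hs : Summable (fun n : ℕ =>
        (-1:ℝ)^n/((n:ℝ)+1) - (-1:ℝ)^(n+2)/(((n:ℝ)+2)+1)) := by
      apply Summable.of_abs
      have hb : Summable (fun n : ℕ => (2:ℝ) * (1/((n:ℝ)+1)^2)) :=
        (summable_one_div_shift 2 le_rfl).mul_left 2
      apply hb.of_nonneg_of_le (fun n => abs_nonneg _)
      intro n
      have h3 : ((n:ℝ)+3) ≠ 0 := by positivity
      have h1' : ((n:ℝ)+1) ≠ 0 := by positivity
      have heq2 : (-1:ℝ)^n/((n:ℝ)+1) - (-1:ℝ)^(n+2)/(((n:ℝ)+2)+1)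
          = (-1:ℝ)^n * (2/(((n:ℝ)+1)*((n:ℝ)+3))) := by
        rw [pow_add]
        field_simp
        ring
      rw [heq2, abs_mul, abs_pow, abs_neg, abs_one, one_pow, one_mul]
      rw [abs_of_nonneg (by positivity)]
      rw [mul_one_div]
      apply div_le_div_of_nonneg_left (by norm_num) (by positivity)
      nlinarith [sq_nonneg ((n:ℝ)+1)]
    have hlim : Tendsto (fun n : ℕ => (-1:ℝ)^n/((n:ℝ)+1)) atTop (nhds 0) := by
      apply squeeze_zero_norm (a := fun n : ℕ => 1/((n:ℝ)+1))
        (fun n => by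
          rw [norm_div, norm_pow, norm_neg, norm_one, one_pow,
            Real.norm_of_nonneg (by positivity : (0:ℝ) ≤ (n:ℝ)+1)])
        tendsto_one_div_add_atTop_nhds_zero_nat
    have hfn : ∀ n : ℕ, (-1:ℝ)^(n+2)/(((n:ℝ)+2)+1)
        = (fun m : ℕ => (-1:ℝ)^m/((m:ℝ)+1)) (n+2) := by
      intro n; push_cast; ring_nf
    have hs' : Summable (fun n : ℕ => (fun m : ℕ => (-1:ℝ)^m/((m:ℝ)+1)) n
        - (fun m : ℕ => (-1:ℝ)^m/((m:ℝ)+1)) (n+2)) := by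
      apply hs.congr; intro n; rw [hfn n]
    have H := hasSum_tele (fun m : ℕ => (-1:ℝ)^m/((m:ℝ)+1)) hs' hlim
    rw [heq]
    have hval : ((if Even 1 then 2 * etaR 1 else 0) - (-1:ℝ)^1 * (1 - 1/2^1))
        = (-1:ℝ)^0/(((0:ℕ):ℝ)+1) + (-1:ℝ)^1/(((1:ℕ):ℝ)+1) := by
      norm_num
    rw [hval]
    have hfun : (fun n : ℕ => (fun m : ℕ => (-1:ℝ)^m/((m:ℝ)+1)) n
        - (fun m : ℕ => (-1:ℝ)^m/((m:ℝ)+1)) (n+2))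
        = (fun n : ℕ => (-1:ℝ)^n/((n:ℝ)+1) - (-1:ℝ)^(n+2)/(((n:ℝ)+2)+1)) := by
      funext n
      rw [← hfn n]
    rw [← hfun]
    exact H
  · -- j ≥ 2
    have hj2 : 2 ≤ j := h2
    have hsum1 := summable_eta j hj2
    have hsum2 := summable_eta_shift j hj2
    have H : HasSum (fun n : ℕ => (-1:ℝ)^n/((n:ℝ)+1)^j + (-1:ℝ)^j * ((-1:ℝ)^n/((n:ℝ)+3)^j))
        (etaR j + (-1)^j * (etaR j - 1 + 1/2^j)) := by
      have h1 : HasSum (fun n : ℕ => (-1:ℝ)^n/((n:ℝ)+1)^j) (etaR j) := hsum1.hasSum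
      have h2' : HasSum (fun n : ℕ => (-1:ℝ)^j * ((-1:ℝ)^n/((n:ℝ)+3)^j))
          ((-1:ℝ)^j * (etaR j - 1 + 1/2^j)) := by
        have := hsum2.hasSum
        rw [tsum_eta_shift j hj2] at this
        exact this.mul_left _
      exact h1.add h2'
    have hval : ((if Even j then 2 * etaR j else 0) - (-1:ℝ)^j * (1 - 1/2^j))
        = etaR j + (-1)^j * (etaR j - 1 + 1/2^j) := by
      rcases Nat.even_or_odd j with he | ho
      · rw [if_pos he, he.neg_one_pow]; ring
      · rw [if_neg (by simpa using Nat.not_even_iff_odd.mpr ho), ho.neg_one_pow]; ring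
    rw [hval]
    have hfun : (fun n : ℕ => (-1:ℝ)^n * (1/((n:ℝ)+1)^j + (-1)^j / ((n:ℝ)+3)^j))
        = (fun n : ℕ => (-1:ℝ)^n/((n:ℝ)+1)^j + (-1:ℝ)^j * ((-1:ℝ)^n/((n:ℝ)+3)^j)) := by
      funext n
      ring
    rw [hfun]
    exact H

lemma B2 (p : ℕ) (hp : 1 ≤ p) :
    ∑ i ∈ range p, ((p+i-1).choose i : ℝ) = ((2*p-1).choose (p-1) : ℝ) := by
  have key : ∑ i ∈ range p, (p+i-1).choose i = (2*p-1).choose (p-1) := by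
    have h1 : ∀ i ∈ range p, (p+i-1).choose i = (p+i-1).choose (p-1) := by
      intro i hi
      have hip : i < p := mem_range.mp hi
      have : (p+i-1) - i = p - 1 := by omega
      rw [← this, Nat.choose_symm (by omega)]
    rw [Finset.sum_congr rfl h1]
    have h2 : ∑ i ∈ range p, (p+i-1).choose (p-1)
        = ∑ m ∈ Icc (p-1) (2*p-2), m.choose (p-1) := by
      apply Finset.sum_nbij' (fun i => p+i-1) (fun m => m-(p-1))
      · intro i hi; simp at hi ⊢; omega
      · intro m hm; simp at hm ⊢; omega
      · intro i hi; simp at hi; omega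
      · intro m hm; simp at hm; omega
      · intro i hi; rfl
    rw [h2, Nat.sum_Icc_choose]
    have : 2*p-2+1 = 2*p-1 := by omega
    rw [this]
    have h3 := Nat.choose_symm (show p-1+1 ≤ 2*p-1 by omega)
    rw [show (2*p-1) - (p-1+1) = p-1 by omega] at h3
    exact h3.symm
  exact_mod_cast congrArg (Nat.cast : ℕ → ℝ) key

lemma B1aux : ∀ n : ℕ, ∑ i ∈ range (n+1), ((n+i).choose i : ℝ) * 2^(n-i) = 2^(2*n) := by
  intro n
  induction n with
  | zero => simp
  | succ n ih =>
    -- S = ∑_{i ∈ range (n+2)} C(n+1+i, i) 2^{n+1-i}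
    set S := ∑ i ∈ range (n+2), ((n+1+i).choose i : ℝ) * 2^(n+1-i) with hS
    -- peel i = 0 and use Pascal
    have step1 : S = 2^(n+1) + ∑ i ∈ range (n+1), ((n+1+i).choose i : ℝ) * 2^(n-i)
        + ∑ i ∈ range (n+1), ((n+1+i).choose (i+1) : ℝ) * 2^(n-i) := by
      rw [hS, Finset.sum_range_succ' (fun i => ((n+1+i).choose i : ℝ) * 2^(n+1-i)) (n+1)]
      have hterm : ∀ i ∈ range (n+1),
          ((n+1+(i+1)).choose (i+1) : ℝ) * 2^(n+1-(i+1))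
          = ((n+1+i).choose i : ℝ) * 2^(n-i) + ((n+1+i).choose (i+1) : ℝ) * 2^(n-i) := by
        intro i hi
        have e1 : n+1+(i+1) = (n+1+i)+1 := by omega
        have e2 : n+1-(i+1) = n-i := by omega
        rw [e1, e2, Nat.choose_succ_succ (n+1+i) i]
        push_cast
        ring
      rw [Finset.sum_congr rfl hterm, Finset.sum_add_distrib]
      simp
      ring
    -- A : ∑_{i ∈ range(n+1)} C(n+1+i,i) 2^{n-i} = (S - C(2n+2, n+1))/2
    have stepA : S = 2 * (∑ i ∈ range (n+1), ((n+1+i).choose i : ℝ) * 2^(n-i))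
        + ((2*n+2).choose (n+1) : ℝ) := by
      rw [hS, Finset.sum_range_succ]
      rw [Finset.mul_sum]
      have hterm : ∀ i ∈ range (n+1),
          ((n+1+i).choose i : ℝ) * 2^(n+1-i) = 2 * (((n+1+i).choose i : ℝ) * 2^(n-i)) := by
        intro i hi
        have hi' : i < n+1 := mem_range.mp hi
        rw [show n+1-i = (n-i)+1 by omega, pow_succ]
        ring
      rw [Finset.sum_congr rfl hterm]
      congr 1
      · rw [show n+1+(n+1) = 2*n+2 by omega]
        norm_num
    -- B : ∑_{i∈range(n+1)} C(n+1+i, i+1) 2^{n-i} = 2*2^{2n} + C(2n+1, n+1) - 2^{n+1}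
    have stepB : ∑ i ∈ range (n+1), ((n+1+i).choose (i+1) : ℝ) * 2^(n-i)
        = 2 * 2^(2*n) + ((2*n+1).choose (n+1) : ℝ) - 2^(n+1) := by
      have h1 : ∑ k ∈ range (n+2), ((n+k).choose k : ℝ) * 2^(n+1-k)
          = ((n+0).choose 0 : ℝ) * 2^(n+1-0)
            + ∑ i ∈ range (n+1), ((n+(i+1)).choose (i+1) : ℝ) * 2^(n+1-(i+1)) := by
        rw [Finset.sum_range_succ' (fun k => ((n+k).choose k : ℝ) * 2^(n+1-k)) (n+1)]
        ring
      have h2 : ∑ k ∈ range (n+2), ((n+k).choose k : ℝ) * 2^(n+1-k)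
          = 2 * 2^(2*n) + ((2*n+1).choose (n+1) : ℝ) := by
        rw [Finset.sum_range_succ]
        have hterm : ∀ k ∈ range (n+1),
            ((n+k).choose k : ℝ) * 2^(n+1-k) = 2 * (((n+k).choose k : ℝ) * 2^(n-k)) := by
          intro k hk
          have hk' : k < n+1 := mem_range.mp hk
          rw [show n+1-k = (n-k)+1 by omega, pow_succ]
          ring
        rw [Finset.sum_congr rfl hterm, ← Finset.mul_sum, ih]
        rw [show n+(n+1) = 2*n+1 by omega, show n+1-(n+1) = 0 by omega]
        norm_num
      have h3 : ∀ i ∈ range (n+1), ((n+(i+1)).choose (i+1) : ℝ) * 2^(n+1-(i+1))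
          = ((n+1+i).choose (i+1) : ℝ) * 2^(n-i) := by
        intro i hi
        rw [show n+(i+1) = n+1+i by omega, show n+1-(i+1) = n-i by omega]
      rw [Finset.sum_congr rfl h3] at h1
      simp only [Nat.add_zero, Nat.choose_zero_right, Nat.cast_one, one_mul, Nat.sub_zero] at h1
      rw [h2] at h1
      linarith
    -- C(2n+2, n+1) = 2 * C(2n+1, n+1)
    have hcc : ((2*n+2).choose (n+1) : ℝ) = 2 * ((2*n+1).choose (n+1) : ℝ) := by
      have h := Nat.succ_sub_one (2*n+1) ▸ Nat.choose_succ_succ (2*n+1) n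
      have e : (2*n+2) = (2*n+1)+1 := by omega
      rw [e, Nat.choose_succ_succ (2*n+1) n]
      have hsymm : (2*n+1).choose n = (2*n+1).choose (n+1) := by
        have h3 := Nat.choose_symm (show n+1 ≤ 2*n+1 by omega)
        rw [show (2*n+1) - (n+1) = n by omega] at h3
        exact h3
      rw [hsymm]
      push_cast
      ring
    have hp : (2:ℝ)^(2*(n+1)) = 4 * 2^(2*n) := by
      rw [show 2*(n+1) = 2*n+2 by omega, pow_add]; ring
    rw [hp]
    linarith [step1, stepA, stepB, hcc]

lemma B1 (p : ℕ) (hp : 1 ≤ p) :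
    ∑ i ∈ range p, ((p+i-1).choose i : ℝ) * 2^(p-i) = 2^(2*p-1) := by
  obtain ⟨n, rfl⟩ : ∃ n, p = n + 1 := ⟨p - 1, by omega⟩
  have h := B1aux n
  have hterm : ∀ i ∈ range (n+1), ((n+1+i-1).choose i : ℝ) * 2^(n+1-i)
      = 2 * (((n+i).choose i : ℝ) * 2^(n-i)) := by
    intro i hi
    have hi' : i < n+1 := mem_range.mp hi
    rw [show n+1+i-1 = n+i by omega, show n+1-i = (n-i)+1 by omega, pow_succ]
    ring
  rw [Finset.sum_congr rfl hterm, ← Finset.mul_sum, h,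
    show 2*(n+1)-1 = 2*n+1 by omega, pow_succ]
  ring


noncomputable def Vv (j : ℕ) : ℝ :=
  (if Even j then 2 * etaR j else 0) - (-1:ℝ)^j * (1 - 1/2^j)

theorem D_eq_eta_combination (p : ℕ) (hp : 1 ≤ p) :
    D p = (-1 : ℝ) ^ p *
      ((∑ m ∈ Finset.Icc 1 (p / 2),
          (2 : ℝ) ^ (2 * m + 1) * (Nat.choose (2 * p - 2 * m - 1) (p - 1) : ℝ) * etaR (2 * m))
        - (2 : ℝ) ^ (2 * p - 1) + (Nat.choose (2 * p - 1) (p - 1) : ℝ)) := by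
  -- the summands after partial fraction expansion
  set F : ℕ → ℕ → ℝ := fun i n =>
    (((p+i-1).choose i : ℝ) * 2^(p-i) * (-1)^i) *
      ((-1:ℝ)^n * (1/((n:ℝ)+1)^(p-i) + (-1)^(p-i)/((n:ℝ)+3)^(p-i))) with hF
  have hHS : ∀ i ∈ range p, HasSum (F i)
      ((((p+i-1).choose i : ℝ) * 2^(p-i) * (-1)^i) * Vv (p-i)) := by
    intro i hi
    have hip : i < p := mem_range.mp hi
    exact (inner_hasSum (p-i) (by omega)).mul_left _
  have hD : D p = ∑ i ∈ range p, (((p+i-1).choose i : ℝ) * 2^(p-i) * (-1)^i) * Vv (p-i) := by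
    unfold D
    have hcong : ∀ n : ℕ, (-1 : ℝ) ^ n * (2 : ℝ) ^ (2 * p) / (((n : ℝ) + 1) ^ p * ((n : ℝ) + 3) ^ p)
        = ∑ i ∈ range p, F i n := by
      intro n
      have hx : ((n:ℝ)+1) ≠ 0 := by positivity
      have hx2 : ((n:ℝ)+1) + 2 ≠ 0 := by positivity
      have h3 : ((n:ℝ)+3) = ((n:ℝ)+1) + 2 := by ring
      rw [mul_div_assoc, h3, expand_pf p hp _ hx hx2, Finset.mul_sum]
      apply Finset.sum_congr rfl
      intro i hi
      have hip : i < p := mem_range.mp hi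
      have hpexp : (-1:ℝ)^p = (-1)^i * (-1)^(p-i) := by
        rw [← pow_add]; congr 1; omega
      rw [hF, hpexp]
      ring
    rw [tsum_congr hcong, Summable.tsum_finsetSum (fun i hi => (hHS i hi).summable)]
    exact Finset.sum_congr rfl (fun i hi => (hHS i hi).tsum_eq)
  rw [hD]
  -- split the value
  have hsplit : ∀ i ∈ range p,
      (((p+i-1).choose i : ℝ) * 2^(p-i) * (-1)^i) * Vv (p-i)
      = (if Even (p-i) then (((p+i-1).choose i : ℝ) * 2^(p-i) * (-1)^i) * (2 * etaR (p-i)) else 0)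
        - ((p+i-1).choose i : ℝ) * (-1)^p * (2^(p-i) - 1) := by
    intro i hi
    have hip : i < p := mem_range.mp hi
    have h2ne : (2:ℝ)^(p-i) ≠ 0 := by positivity
    have hpexp : (-1:ℝ)^p = (-1)^i * (-1)^(p-i) := by
      rw [← pow_add]; congr 1; omega
    unfold Vv
    rw [mul_sub, hpexp]
    congr 1
    · rcases Nat.even_or_odd (p-i) with he | ho
      · rw [if_pos he, if_pos he]
      · rw [if_neg (by simpa using Nat.not_even_iff_odd.mpr ho),
          if_neg (by simpa using Nat.not_even_iff_odd.mpr ho), mul_zero]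
    · field_simp
  rw [Finset.sum_congr rfl hsplit, Finset.sum_sub_distrib]
  -- constant part
  have hconst : ∑ i ∈ range p, ((p+i-1).choose i : ℝ) * (-1)^p * (2^(p-i) - 1)
      = (-1:ℝ)^p * (2^(2*p-1) - ((2*p-1).choose (p-1) : ℝ)) := by
    have : ∀ i ∈ range p, ((p+i-1).choose i : ℝ) * (-1)^p * (2^(p-i) - 1)
        = (-1:ℝ)^p * (((p+i-1).choose i : ℝ) * 2^(p-i)) - (-1:ℝ)^p * ((p+i-1).choose i : ℝ) := by
      intro i _; ring
    rw [Finset.sum_congr rfl this, Finset.sum_sub_distrib, ← Finset.mul_sum, ← Finset.mul_sum,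
      B1 p hp, B2 p hp]
    ring
  -- eta part
  have heta : ∑ i ∈ range p,
      (if Even (p-i) then (((p+i-1).choose i : ℝ) * 2^(p-i) * (-1)^i) * (2 * etaR (p-i)) else 0)
      = ∑ m ∈ Finset.Icc 1 (p / 2),
          (-1:ℝ)^p * ((2 : ℝ) ^ (2 * m + 1) * (Nat.choose (2 * p - 2 * m - 1) (p - 1) : ℝ) * etaR (2 * m)) := by
    rw [← Finset.sum_filter]
    apply Finset.sum_nbij' (fun i => (p-i)/2) (fun m => p - 2*m)
    · intro i hi
      simp only [Finset.mem_filter, Finset.mem_range] at hi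
      rcases hi.2 with ⟨k, hk⟩
      simp only [Finset.mem_Icc]
      omega
    · intro m hm
      simp only [Finset.mem_Icc] at hm
      simp only [Finset.mem_filter, Finset.mem_range]
      constructor
      · omega
      · refine ⟨m, ?_⟩
        omega
    · intro i hi
      simp only [Finset.mem_filter, Finset.mem_range] at hi
      rcases hi.2 with ⟨k, hk⟩
      omega
    · intro m hm
      simp only [Finset.mem_Icc] at hm
      omega
    · intro i hi
      simp only [Finset.mem_filter, Finset.mem_range] at hi
      rcases hi.2 with ⟨k, hk⟩
      have hik : p - i = 2*((p-i)/2) := by omega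
      set m := (p-i)/2 with hm
      have h1 : p - i = 2*m := hik
      have hchoose : (p+i-1).choose i = (2*p-2*m-1).choose (p-1) := by
        have e1 : p+i-1 = 2*p-2*m-1 := by omega
        rw [e1]
        have h3 := Nat.choose_symm (show p-1 ≤ 2*p-2*m-1 by omega)
        rw [show (2*p-2*m-1) - (p-1) = i by omega] at h3
        exact h3
      have hsign : (-1:ℝ)^i = (-1)^p := by
        have hpe : (-1:ℝ)^p = (-1)^i * (-1)^(p-i) := by
          rw [← pow_add]; congr 1; omega
        have he : Even (2*m) := ⟨m, by omega⟩
        rw [hpe, h1, he.neg_one_pow, mul_one]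
      rw [hchoose, hsign, h1, pow_succ]
      ring
  rw [heta, hconst, ← Finset.mul_sum]
  ring
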